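/- Let (Ω, 𝒜, μ) be a probability space, 𝒢 ⊆ 𝒜 a sub-σ-algebra, k a positive integer, and U ⊆ ℝᵏ a convex set. Let h : Ω → ℝᵏ be Bochner integrable and let u : Ω → ℝᵏ be strongly 𝒢-measurable and essentially bounded with u(ω) belonging to the interior of U for μ-a.e. ω. If for every v ∈ U one has E[⟨h, v − u⟩ | 𝒢] ≤ 0 μ-a.e., then E[h | 𝒢] = 0 μ-a.e.; in particular E[⟨h, v − u⟩ | 𝒢] = 0 μ-a.e. for every v ∈ U. -/

import Mathlib

open MeasureTheory
open scoped RealInnerProductSpace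

section Aux

private lemma clm_integral_comm {Ω : Type*} {m : MeasurableSpace Ω} (ν : Measure Ω)
    {E F : Type*} [NormedAddCommGroup E] [NormedSpace ℝ E] [CompleteSpace E]
    [NormedAddCommGroup F] [NormedSpace ℝ F] [CompleteSpace F]
    (L : E →L[ℝ] F) {φ : Ω → E} (hφ : Integrable φ ν) :
    ∫ x, L (φ x) ∂ν = L (∫ x, φ x ∂ν) :=
  ContinuousLinearMap.integral_comp_comm L hφ

private lemma coord_abs_le {k : ℕ} (x : EuclideanSpace ℝ (Fin k)) (i : Fin k) : |x i| ≤ ‖x‖ := by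
  have h1 : x i = ⟪EuclideanSpace.single i (1 : ℝ), x⟫ := by
    simp [EuclideanSpace.inner_single_left]
  rw [h1]
  calc |⟪EuclideanSpace.single i (1 : ℝ), x⟫| ≤ ‖EuclideanSpace.single i (1 : ℝ)‖ * ‖x‖ :=
        abs_real_inner_le_norm _ _
    _ = ‖x‖ := by simp [EuclideanSpace.norm_single]

/-- Conditional expectation commutes with coordinate projections. -/
private lemma condexp_coord {Ω : Type*} {m0 : MeasurableSpace Ω} {μ : Measure Ω}
    [IsProbabilityMeasure μ] {𝒢 : MeasurableSpace Ω} {k : ℕ} (h𝒢 : 𝒢 ≤ m0) (f : Ω → EuclideanSpace ℝ (Fin k))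
    (hf : Integrable f μ) (i : Fin k) :
    (fun ω => (μ[f|𝒢]) ω i) =ᵐ[μ] μ[fun ω => f ω i|𝒢] := by
  haveI : SigmaFinite (μ.trim h𝒢) := inferInstance
  have hfi : Integrable (fun ω => f ω i) μ :=
    (EuclideanSpace.proj i : EuclideanSpace ℝ (Fin k) →L[ℝ] ℝ).integrable_comp hf
  refine ae_eq_condExp_of_forall_setIntegral_eq h𝒢 hfi ?_ ?_ ?_
  · intro s _ _
    exact ((EuclideanSpace.proj i : EuclideanSpace ℝ (Fin k) →L[ℝ] ℝ).integrable_comp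
      (integrable_condExp : Integrable (μ[f|𝒢]) μ)).restrict
  · intro s hs hμs
    have h1 := clm_integral_comm (μ.restrict s)
      (EuclideanSpace.proj i : EuclideanSpace ℝ (Fin k) →L[ℝ] ℝ)
      ((integrable_condExp : Integrable (μ[f|𝒢]) μ).restrict :
        Integrable (μ[f|𝒢]) (μ.restrict s))
    have h2 := clm_integral_comm (μ.restrict s)
      (EuclideanSpace.proj i : EuclideanSpace ℝ (Fin k) →L[ℝ] ℝ)
      (hf.restrict : Integrable f (μ.restrict s))
    calc ∫ x in s, (μ[f|𝒢]) x i ∂μ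
        = (EuclideanSpace.proj i) (∫ x in s, (μ[f|𝒢]) x ∂μ) := h1
      _ = (EuclideanSpace.proj i) (∫ x in s, f x ∂μ) := by
          rw [setIntegral_condExp h𝒢 hf hs]
      _ = ∫ x in s, f x i ∂μ := h2.symm
  · exact StronglyMeasurable.aestronglyMeasurable
      ((EuclideanSpace.proj i).continuous.comp_stronglyMeasurable stronglyMeasurable_condExp)

/-- The conditional variational quantity equals the inner product with the
conditional expectation. -/
private lemma condexp_inner_eq {Ω : Type*} {m0 : MeasurableSpace Ω} {μ : Measure Ω}
    [IsProbabilityMeasure μ] {𝒢 : MeasurableSpace Ω} {k : ℕ} (h𝒢 : 𝒢 ≤ m0)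
    (h : Ω → EuclideanSpace ℝ (Fin k)) (hint : Integrable h μ)
    (u : Ω → EuclideanSpace ℝ (Fin k)) (hu : StronglyMeasurable[𝒢] u)
    {C : ℝ} (hubd : ∀ᵐ ω ∂μ, ‖u ω‖ ≤ C) (v : EuclideanSpace ℝ (Fin k)) :
    μ[fun ω => ⟪h ω, v - u ω⟫|𝒢] =ᵐ[μ] fun ω => ⟪(μ[h|𝒢]) ω, v - u ω⟫ := by
  haveI : SigmaFinite (μ.trim h𝒢) := inferInstance
  set f : Fin k → Ω → ℝ := fun i ω => (v i - u ω i) * h ω i with hf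
  have hbd : ∀ i : Fin k, ∀ᵐ ω ∂μ, ‖v i - u ω i‖ ≤ ‖v‖ + C := by
    intro i
    filter_upwards [hubd] with ω hω
    calc ‖v i - u ω i‖ ≤ |v i| + |u ω i| := abs_sub _ _
      _ ≤ ‖v‖ + C := add_le_add (coord_abs_le v i) ((coord_abs_le (u ω) i).trans hω)
  have humeas : ∀ i : Fin k, StronglyMeasurable[𝒢] (fun ω => v i - u ω i) := fun i =>
    stronglyMeasurable_const.sub
      ((EuclideanSpace.proj i).continuous.comp_stronglyMeasurable hu)
  have hhi : ∀ i : Fin k, Integrable (fun ω => h ω i) μ := fun i =>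
    (EuclideanSpace.proj i : EuclideanSpace ℝ (Fin k) →L[ℝ] ℝ).integrable_comp hint
  have hfi : ∀ i : Fin k, Integrable (f i) μ := fun i =>
    (hhi i).bdd_mul ((humeas i).mono h𝒢).aestronglyMeasurable (hbd i)
  have heq : (fun ω => ⟪h ω, v - u ω⟫) = ∑ i : Fin k, f i := by
    funext ω
    rw [Finset.sum_apply]
    simp only [hf, PiLp.inner_apply, RCLike.inner_apply, conj_trivial]
    refine Finset.sum_congr rfl fun i _ => ?_
    have : (v - u ω) i = v i - u ω i := rfl
    rw [this]
  have hsum : μ[fun ω => ⟪h ω, v - u ω⟫|𝒢] =ᵐ[μ] ∑ i : Fin k, μ[f i|𝒢] := by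
    rw [heq]
    exact condExp_finsetSum (fun i _ => hfi i) 𝒢
  have hterm : ∀ᵐ ω ∂μ, ∀ i : Fin k, (μ[f i|𝒢]) ω = (v i - u ω i) * ((μ[h|𝒢]) ω i) := by
    rw [ae_all_iff]
    intro i
    have h1 : μ[f i|𝒢] =ᵐ[μ] (fun ω => v i - u ω i) * μ[fun ω => h ω i|𝒢] :=
      condExp_stronglyMeasurable_mul_of_bound h𝒢 (humeas i) (hhi i) (‖v‖ + C) (hbd i)
    have h2 := condexp_coord (μ := μ) h𝒢 h hint i
    filter_upwards [h1, h2] with ω hω1 hω2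
    rw [hω1, Pi.mul_apply, ← hω2]
  refine hsum.trans ?_
  filter_upwards [hterm] with ω hω
  rw [Finset.sum_apply]
  simp only [hω]
  simp only [PiLp.inner_apply, RCLike.inner_apply, conj_trivial]
  refine Finset.sum_congr rfl fun i _ => ?_
  have : (v - u ω) i = v i - u ω i := rfl
  rw [this]

end Aux

/-- Remark 1 of the paper: when the equilibrium control takes values in the
interior of the control set, the conditional variational inequalities of the
necessary maximum principle become equalities. -/
theorem conditional_variational_equality {Ω : Type*} [m0 : MeasurableSpace Ω]
    (μ : Measure Ω) [IsProbabilityMeasure μ]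
    (𝒢 : MeasurableSpace Ω) (h𝒢 : 𝒢 ≤ m0)
    (k : ℕ) (hk : 0 < k)
    (U : Set (EuclideanSpace ℝ (Fin k))) (hUconv : Convex ℝ U)
    (h : Ω → EuclideanSpace ℝ (Fin k)) (hint : Integrable h μ)
    (u : Ω → EuclideanSpace ℝ (Fin k)) (hu : StronglyMeasurable[𝒢] u)
    (hubd : ∃ C : ℝ, ∀ᵐ ω ∂μ, ‖u ω‖ ≤ C)
    (huU : ∀ᵐ ω ∂μ, u ω ∈ interior U)
    (hvar : ∀ v ∈ U, ∀ᵐ ω ∂μ, (μ[fun ω => ⟪h ω, v - u ω⟫ | 𝒢]) ω ≤ 0) :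
    (μ[h | 𝒢] =ᵐ[μ] 0) ∧
      ∀ v ∈ U, (fun ω => (μ[fun ω => ⟪h ω, v - u ω⟫ | 𝒢]) ω) =ᵐ[μ] 0 := by
  obtain ⟨C, hubd⟩ := hubd
  set g := μ[h|𝒢] with hg
  -- Step A applied: for each `v ∈ U`, `⟪g ω, v - u ω⟫ ≤ 0` a.e.
  have hineq : ∀ v ∈ U, ∀ᵐ ω ∂μ, ⟪g ω, v - u ω⟫ ≤ 0 := by
    intro v hv
    have hA := condexp_inner_eq (μ := μ) h𝒢 h hint u hu hubd v
    filter_upwards [hvar v hv, hA] with ω h1 h2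
    rw [← h2]; exact h1
  -- countable dense subset of U
  obtain ⟨t, htU, htc, hUt⟩ :=
    (TopologicalSpace.IsSeparable.of_separableSpace U).exists_countable_dense_subset
  have hae : ∀ᵐ ω ∂μ, ∀ v ∈ t, ⟪g ω, v - u ω⟫ ≤ 0 :=
    (ae_ball_iff htc).2 fun v hv => hineq v (htU hv)
  -- main conclusion: g = 0 a.e.
  have hzero : g =ᵐ[μ] 0 := by
    filter_upwards [hae, huU] with ω h1 h2
    have h3 : ∀ v ∈ U, ⟪g ω, v - u ω⟫ ≤ 0 := by
      intro v hv
      have hcl : IsClosed {w : EuclideanSpace ℝ (Fin k) | ⟪g ω, w - u ω⟫ ≤ 0} :=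
        isClosed_le (Continuous.inner continuous_const (continuous_id.sub continuous_const))
          continuous_const
      exact hcl.closure_subset_iff.2 h1 (hUt hv)
    by_contra hg0
    have hg0' : g ω ≠ 0 := hg0
    have hgpos : 0 < ‖g ω‖ := norm_pos_iff.2 hg0'
    obtain ⟨ε, hε, hball⟩ := Metric.isOpen_iff.1 isOpen_interior (u ω) h2
    set w : EuclideanSpace ℝ (Fin k) := u ω + (ε / 2 / ‖g ω‖) • g ω with hw
    have hwball : w ∈ Metric.ball (u ω) ε := by
      rw [Metric.mem_ball, dist_eq_norm, hw]
      have : u ω + (ε / 2 / ‖g ω‖) • g ω - u ω = (ε / 2 / ‖g ω‖) • g ω := by abel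
      rw [this, norm_smul, Real.norm_eq_abs, abs_of_pos (by positivity), div_mul_cancel₀]
      · linarith
      · exact hgpos.ne'
    have hwU : w ∈ U := interior_subset (hball hwball)
    have h4 := h3 w hwU
    have h5 : w - u ω = (ε / 2 / ‖g ω‖) • g ω := by rw [hw]; abel
    rw [h5, real_inner_smul_right, real_inner_self_eq_norm_sq] at h4
    have : 0 < ε / 2 / ‖g ω‖ * (‖g ω‖ * ‖g ω‖) := by positivity
    rw [pow_two] at h4
    linarith
  refine ⟨hzero, fun v hv => ?_⟩
  have hA := condexp_inner_eq (μ := μ) h𝒢 h hint u hu hubd v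
  filter_upwards [hA, hzero] with ω h1 h2
  have h2' : (μ[h|𝒢]) ω = 0 := h2
  rw [h1, h2']
  simp
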